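/- Let P be a polyhedron in a real vector space, τ ≠ P a face of P, and let F_τ be the set of maximal proper faces of P containing τ. Suppose for each θ ∈ F_τ a nonzero linear functional f_θ is chosen with f_θ ≥ 0 on P and f_θ = 0 on θ, such that τ = (∩_{θ ∈ F_τ} ker f_θ) ∩ P. If γ is a face of P and b ∈ relint(γ) satisfies f_θ(b) = 0 for all θ ∈ F_τ, then γ ⊆ τ. -/

import Mathlib

/-- `F` is a face of the convex set `C`. (`C` itself is a face of `C`.) -/
def IsFaceOf {V : Type*} [AddCommGroup V] [Module ℝ V] (F C : Set V) : Prop :=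
  F ⊆ C ∧ Convex ℝ F ∧ ∀ x ∈ C, ∀ y ∈ C, ∀ δ : ℝ, 0 < δ → δ < 1 →
    δ • x + (1 - δ) • y ∈ F → x ∈ F ∧ y ∈ F

/-- Let `P` be a polyhedron, `τ ≠ P` a face of `P`, and `Fτ` the set of
maximal proper faces of `P` containing `τ`.  Choose for each `θ ∈ Fτ` a nonzero linear
functional `f θ` with `f θ ≥ 0` on `P`, `f θ = 0` on `θ`, such that
`τ = (∩_{θ ∈ Fτ} ker (f θ)) ∩ P`.  If `γ` is a face of `P` and `b ∈ relint γ` satisfies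
`f θ b = 0` for all `θ ∈ Fτ`, then `γ ⊆ τ`. -/
theorem stmt_14 {V : Type*} [NormedAddCommGroup V] [NormedSpace ℝ V]
    [FiniteDimensional ℝ V] (P : Set V)
    (hpoly : ∃ H : Finset ((V →ₗ[ℝ] ℝ) × ℝ), P = {x | ∀ h ∈ H, h.2 ≤ h.1 x})
    (τ : Set V) (hτ : IsFaceOf τ P) (hτne : τ ≠ P)
    (Fτ : Set (Set V))
    (hFτ : Fτ = {θ | IsFaceOf θ P ∧ θ ≠ P ∧ τ ⊆ θ ∧
      ∀ θ', IsFaceOf θ' P → θ' ≠ P → θ ⊆ θ' → θ' = θ})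
    (f : Set V → (V →ₗ[ℝ] ℝ))
    (hfne : ∀ θ ∈ Fτ, f θ ≠ 0)
    (hfP : ∀ θ ∈ Fτ, ∀ x ∈ P, 0 ≤ f θ x)
    (hfθ : ∀ θ ∈ Fτ, ∀ x ∈ θ, f θ x = 0)
    (hτeq : τ = (⋂ θ ∈ Fτ, {x | f θ x = 0}) ∩ P)
    (γ : Set V) (hγ : IsFaceOf γ P) (b : V)
    (hb : b ∈ intrinsicInterior ℝ γ) (hbf : ∀ θ ∈ Fτ, f θ b = 0) :
    γ ⊆ τ := by
  intro g hg
  obtain ⟨b', hb'int, hb'⟩ := mem_intrinsicInterior.mp hb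
  -- key claim: f θ g = 0 for all θ ∈ Fτ
  have key : ∀ θ ∈ Fτ, f θ g = 0 := by
    intro θ hθ
    haveI : Nonempty (affineSpan ℝ γ) := ⟨b'⟩
    have hgspan : g ∈ affineSpan ℝ γ := subset_affineSpan ℝ γ hg
    set g' : affineSpan ℝ γ := ⟨g, hgspan⟩ with hg'
    have hcont : Continuous (fun t : ℝ => t • (b' -ᵥ g') +ᵥ g' : ℝ → affineSpan ℝ γ) :=
      (continuous_id.fun_smul continuous_const).fun_vadd continuous_const
    have hopen : IsOpen ((fun t : ℝ => t • (b' -ᵥ g') +ᵥ g') ⁻¹'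
        interior ((↑) ⁻¹' γ : Set (affineSpan ℝ γ))) :=
      isOpen_interior.preimage hcont
    have h1mem : (1 : ℝ) ∈ (fun t : ℝ => t • (b' -ᵥ g') +ᵥ g') ⁻¹'
        interior ((↑) ⁻¹' γ : Set (affineSpan ℝ γ)) := by
      simpa using hb'int
    obtain ⟨ε, hε, hball⟩ := Metric.isOpen_iff.mp hopen 1 h1mem
    obtain ⟨t, ht1, htε⟩ : ∃ t : ℝ, 1 < t ∧ |t - 1| < ε :=
      ⟨1 + ε / 2, by linarith, by rw [show (1 + ε/2 - 1) = ε/2 by ring,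
        abs_of_pos (by linarith)]; linarith⟩
    have htmem : t ∈ Metric.ball (1 : ℝ) ε := by
      simpa [Real.dist_eq] using htε
    have hzmem : (t • (b' -ᵥ g') +ᵥ g' : affineSpan ℝ γ) ∈
        interior ((↑) ⁻¹' γ : Set (affineSpan ℝ γ)) := hball htmem
    set z : V := ((t • (b' -ᵥ g') +ᵥ g' : affineSpan ℝ γ) : V) with hzdef
    have hzγ : z ∈ γ := by
      have := interior_subset hzmem
      exact this
    have hz : z = t • (b - g) + g := by
      rw [hzdef]
      simp only [vsub_eq_sub, vadd_eq_add, AffineSubspace.coe_vadd, SetLike.val_smul,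
        AffineSubspace.coe_vsub]
      simp [hb', hg']
    have ht0 : (0 : ℝ) < t := by linarith
    have hbeq : b = (1 - 1/t) • g + (1/t) • z := by
      rw [hz, smul_add, smul_smul, one_div, inv_mul_cancel₀ (ne_of_gt ht0), one_smul]
      module
    have hbcomb : (0:ℝ) = (1 - 1/t) * f θ g + (1/t) * f θ z := by
      rw [← hbf θ hθ, hbeq]; simp
    have hfg : 0 ≤ f θ g := hfP θ hθ g (hγ.1 hg)
    have hfz : 0 ≤ f θ z := hfP θ hθ z (hγ.1 hzγ)
    have htinv : 0 < 1/t := one_div_pos.mpr ht0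
    have hδ : 0 < 1 - 1/t := by
      have : 1/t < 1 := by rw [div_lt_one ht0]; linarith
      linarith
    have hA : (1 - 1/t) * f θ g = 0 := by
      nlinarith [mul_nonneg hδ.le hfg, mul_nonneg htinv.le hfz]
    rcases mul_eq_zero.mp hA with h | h
    · exact absurd h (ne_of_gt hδ)
    · exact h
  rw [hτeq]
  exact ⟨Set.mem_iInter₂.mpr (fun θ hθ => key θ hθ), hγ.1 hg⟩
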